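/- Suppose k is a nonnegative integer, m and n are positive integers with m < n, 0 ≤ α ≤ 1, γ = k if α = 0 and γ = (k,α) if α > 0, U is an open subset of ℝ^m, f : U → ℝ^{n−m}, and X is the set of points at which f is pointwise differentiable of order γ. Then for i = 0,…,k the pointwise differentials pt D^i f are Borel functions whose domains are Borel subsets of ℝ^m, and X is a Borel subset of ℝ^m. -/

import Mathlib

open Metric Set Filter Module MeasureTheory
open scoped Topology ENNReal

noncomputable section

/-- `P` is a polynomial map of degree at most `k`. -/
def IsPolyFn {E F : Type*} [NormedAddCommGroup E] [NormedSpace ℝ E]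
    [NormedAddCommGroup F] [NormedSpace ℝ F] (k : ℕ) (P : E → F) : Prop :=
  ∃ φ : (i : Fin (k+1)) → ContinuousMultilinearMap ℝ (fun _ : Fin (i : ℕ) => E) F,
    ∀ x, P x = ∑ i, φ i fun _ => x

/-- `f : U → F` is pointwise differentiable of order `(k, α)` at `a` (order `k` when
`α = 0`), phrased equivalently via its `k`-jet: there is a polynomial `P` of degree at
most `k` with `f a = P a` and `|f - P| = o(|x-a|^k)` (resp. `O(|x-a|^{k+α})`) on `U`. -/
def PtDiffFnAt {E F : Type*} [NormedAddCommGroup E] [NormedSpace ℝ E]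
    [NormedAddCommGroup F] [NormedSpace ℝ F]
    (k : ℕ) (α : ℝ) (U : Set E) (f : E → F) (a : E) : Prop :=
  a ∈ U ∧ ∃ P : E → F, IsPolyFn k P ∧ f a = P a ∧
    (α = 0 → ∀ ε > 0, ∃ δ > 0, ∀ x ∈ U, dist x a < δ →
      ‖f x - P x‖ ≤ ε * dist x a ^ (k : ℝ)) ∧
    (α ≠ 0 → ∃ C : ℝ, ∃ δ > 0, ∀ x ∈ U, dist x a < δ →
      ‖f x - P x‖ ≤ C * dist x a ^ ((k : ℝ) + α))

/-- `pt D^i f (a) = D`, i.e. `f` is pointwise differentiable of order `i` at `a` and the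
`i`-th derivative at `a` of its `i`-jet equals `D`. -/
def IsPtDiffFnDeriv {E F : Type*} [NormedAddCommGroup E] [NormedSpace ℝ E]
    [NormedAddCommGroup F] [NormedSpace ℝ F]
    (i : ℕ) (U : Set E) (f : E → F) (a : E)
    (D : ContinuousMultilinearMap ℝ (fun _ : Fin i => E) F) : Prop :=
  a ∈ U ∧ ∃ P : E → F, IsPolyFn i P ∧ f a = P a ∧
    (∀ ε > 0, ∃ δ > 0, ∀ x ∈ U, dist x a < δ →
      ‖f x - P x‖ ≤ ε * dist x a ^ (i : ℝ)) ∧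
    D = iteratedFDeriv ℝ i P a

/-- `g` is (globally) of class `γ = (k, α)`: it is `C^k` and, when `α ≠ 0`, its `k`-th
differential is locally `α`-Hölder continuous. -/
def ClassGammaFn {E F : Type*} [NormedAddCommGroup E] [NormedSpace ℝ E]
    [NormedAddCommGroup F] [NormedSpace ℝ F] (k : ℕ) (α : ℝ) (g : E → F) : Prop :=
  ContDiff ℝ k g ∧
  (α ≠ 0 → ∀ x : E, ∃ C : ℝ, ∃ r > 0, ∀ y ∈ ball x r, ∀ z ∈ ball x r,
    ‖iteratedFDeriv ℝ k g y - iteratedFDeriv ℝ k g z‖ ≤ C * ‖y - z‖ ^ α)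

namespace PtAux

variable {E F : Type*} [NormedAddCommGroup E] [NormedSpace ℝ E]
  [NormedAddCommGroup F] [NormedSpace ℝ F]

/-- The space of coefficient data for polynomials of degree at most `i`. -/
abbrev PhiSp (i : ℕ) (E F : Type*) [NormedAddCommGroup E] [NormedSpace ℝ E]
    [NormedAddCommGroup F] [NormedSpace ℝ F] : Type _ :=
  (j : Fin (i+1)) → ContinuousMultilinearMap ℝ (fun _ : Fin (j : ℕ) => E) F

def polyEval (i : ℕ) (φ : PhiSp i E F) (x : E) : F := ∑ j, φ j fun _ => x

lemma polyEval_add (i : ℕ) (φ ψ : PhiSp i E F) (x : E) :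
    polyEval i (φ + ψ) x = polyEval i φ x + polyEval i ψ x := by
  simp [polyEval, Finset.sum_add_distrib]

lemma polyEval_smul (i : ℕ) (c : ℝ) (φ : PhiSp i E F) (x : E) :
    polyEval i (c • φ) x = c • polyEval i φ x := by
  simp [polyEval, Finset.smul_sum]

lemma polyEval_sub (i : ℕ) (φ ψ : PhiSp i E F) (x : E) :
    polyEval i (φ - ψ) x = polyEval i φ x - polyEval i ψ x := by
  simp [polyEval, Finset.sum_sub_distrib]

instance fdCMM (ι : Type) [Fintype ι] [FiniteDimensional ℝ E] [FiniteDimensional ℝ F] :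
    FiniteDimensional ℝ (ContinuousMultilinearMap ℝ (fun _ : ι => E) F) :=
  Module.Finite.of_injective (ContinuousMultilinearMap.toMultilinearMapLinear (R' := ℝ) (A := ℝ))
    (fun _ _ h => ContinuousMultilinearMap.toMultilinearMap_injective h)

/-- Evaluation as a linear map in the coefficients. -/
def polyEvalL (i : ℕ) (x : E) : PhiSp i E F →ₗ[ℝ] F where
  toFun φ := polyEval i φ x
  map_add' φ ψ := polyEval_add i φ ψ x
  map_smul' c φ := polyEval_smul i c φ x

lemma continuous_polyEvalL [FiniteDimensional ℝ E] [FiniteDimensional ℝ F] (i : ℕ) (x : E) :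
    Continuous fun φ : PhiSp i E F => polyEval i φ x :=
  (polyEvalL (F := F) i x).continuous_of_finiteDimensional

lemma contDiff_polyEval (i : ℕ) (φ : PhiSp i E F) {n : WithTop ℕ∞} :
    ContDiff ℝ n (polyEval i φ) := by
  refine ContDiff.sum fun j _ => ?_
  have h1 : ContDiff ℝ n ⇑(φ j) := (φ j).contDiff
  have h2 : ContDiff ℝ n fun x : E => (fun _ : Fin (j:ℕ) => x) :=
    (ContinuousLinearMap.pi fun _ : Fin (j:ℕ) => ContinuousLinearMap.id ℝ E).contDiff
  exact h1.comp h2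



/-- The restriction of a polynomial of degree ≤ k to a line is a polynomial of
degree ≤ k in the parameter. -/
lemma exists_coeffs_line (k : ℕ) (φ : PhiSp k E F) (a z : E) :
    ∃ w : Fin (k+1) → F, ∀ t : ℝ, polyEval k φ (a + t • z) = ∑ i : Fin (k+1), t ^ (i : ℕ) • w i := by
  classical
  have hcard : ∀ (d : Fin (k+1)) (S : Finset (Fin (d:ℕ))), S.card < k + 1 := by
    intro d S
    calc S.card ≤ Fintype.card (Fin (d:ℕ)) := S.card_le_univ
    _ = (d:ℕ) := by simp
    _ < k + 1 := d.is_lt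
  refine ⟨fun i => ∑ d : Fin (k+1),
      ∑ S ∈ Finset.univ.filter (fun S : Finset (Fin (d:ℕ)) => S.card = (i : ℕ)),
        φ d (S.piecewise (fun _ => z) (fun _ => a)), fun t => ?_⟩
  have key : ∀ d : Fin (k+1), φ d (fun _ => a + t • z)
      = ∑ S : Finset (Fin (d:ℕ)), t ^ S.card • φ d (S.piecewise (fun _ => z) (fun _ => a)) := by
    intro d
    have h0 : (fun _ : Fin (d:ℕ) => a + t • z)
        = (fun _ : Fin (d:ℕ) => t • z) + (fun _ : Fin (d:ℕ) => a) := by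
      funext; simp [add_comm]
    have hadd := (φ d).toMultilinearMap.map_add_univ (fun _ : Fin (d:ℕ) => t • z) (fun _ => a)
    simp only [ContinuousMultilinearMap.coe_coe] at hadd
    rw [h0, hadd]
    refine Finset.sum_congr rfl fun S _ => ?_
    have h1 : S.piecewise (fun _ : Fin (d:ℕ) => t • z) (fun _ => a)
        = S.piecewise (fun i => t • (S.piecewise (fun _ : Fin (d:ℕ) => z) (fun _ => a)) i)
            (S.piecewise (fun _ : Fin (d:ℕ) => z) (fun _ => a)) := by
      funext i
      by_cases hi : i ∈ S <;> simp [Finset.piecewise_eq_of_mem _ _ _ , hi, Finset.piecewise]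
    rw [h1]
    have := (φ d).toMultilinearMap.map_piecewise_smul (fun _ => t)
      (S.piecewise (fun _ : Fin (d:ℕ) => z) (fun _ => a)) S
    simp only [ContinuousMultilinearMap.coe_coe] at this ⊢
    rw [this, Finset.prod_const]
  calc polyEval k φ (a + t • z) = ∑ d : Fin (k+1), ∑ S : Finset (Fin (d:ℕ)),
        t ^ S.card • φ d (S.piecewise (fun _ => z) (fun _ => a)) := by
        unfold polyEval; exact Finset.sum_congr rfl fun d _ => key d
    _ = ∑ d : Fin (k+1), ∑ i : Fin (k+1),
          ∑ S ∈ Finset.univ.filter (fun S : Finset (Fin (d:ℕ)) =>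
              (⟨S.card, hcard d S⟩ : Fin (k+1)) = i),
            t ^ S.card • φ d (S.piecewise (fun _ => z) (fun _ => a)) := by
        refine Finset.sum_congr rfl fun d _ => ?_
        rw [Finset.sum_fiberwise_of_maps_to (fun S _ => Finset.mem_univ _)]
    _ = ∑ i : Fin (k+1), t ^ (i:ℕ) • ∑ d : Fin (k+1),
          ∑ S ∈ Finset.univ.filter (fun S : Finset (Fin (d:ℕ)) => S.card = (i : ℕ)),
            φ d (S.piecewise (fun _ => z) (fun _ => a)) := by
        rw [Finset.sum_comm]
        refine Finset.sum_congr rfl fun i _ => ?_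
        rw [Finset.smul_sum]
        refine Finset.sum_congr rfl fun d _ => ?_
        rw [Finset.smul_sum]
        have hfil : Finset.univ.filter (fun S : Finset (Fin (d:ℕ)) =>
            (⟨S.card, hcard d S⟩ : Fin (k+1)) = i)
            = Finset.univ.filter (fun S : Finset (Fin (d:ℕ)) => S.card = (i : ℕ)) := by
          ext S; simp [Fin.ext_iff]
        rw [hfil]
        refine Finset.sum_congr rfl fun S hS => ?_
        rw [Finset.mem_filter] at hS
        rw [hS.2]



/-- interpolation nodes in (0,1) -/
def nodes (k : ℕ) (j : Fin (k+1)) : ℝ := ((j : ℕ) + 1) / (k + 2)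

lemma nodes_pos (k : ℕ) (j : Fin (k+1)) : 0 < nodes k j := by
  unfold nodes; positivity

lemma nodes_lt_one (k : ℕ) (j : Fin (k+1)) : nodes k j < 1 := by
  unfold nodes
  rw [div_lt_one (by positivity)]
  have h : ((j:ℕ) : ℝ) < ((k:ℝ) + 1) := by
    have : (j:ℕ) < k + 1 := j.is_lt
    exact_mod_cast this
  linarith

lemma nodes_strictMono (k : ℕ) : StrictMono (nodes k) := by
  intro i j hij
  unfold nodes
  have h : ((i:ℕ) : ℝ) < ((j:ℕ) : ℝ) := by exact_mod_cast (Fin.lt_iff_val_lt_val.mp hij)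
  apply div_lt_div_of_pos_right (by linarith) (by positivity)

/-- Vandermonde-type coefficient bound: the coefficients of a vector-valued polynomial of
degree ≤ k are bounded by its values at the k+1 nodes. -/
lemma coeff_bound (k : ℕ) : ∃ C₀ : ℝ, 0 ≤ C₀ ∧ ∀ (w : Fin (k+1) → F) (c : ℝ),
    (∀ j : Fin (k+1), ‖∑ i : Fin (k+1), (nodes k j) ^ (i : ℕ) • w i‖ ≤ c) →
    ∀ i, ‖w i‖ ≤ C₀ * c := by
  classical
  set M : Matrix (Fin (k+1)) (Fin (k+1)) ℝ := Matrix.vandermonde (nodes k) with hM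
  have hdet : M.det ≠ 0 := by
    rw [hM, Matrix.det_vandermonde]
    refine ne_of_gt (Finset.prod_pos fun i _ => Finset.prod_pos fun j hj => ?_)
    rw [Finset.mem_Ioi] at hj
    have := nodes_strictMono k hj
    linarith
  refine ⟨∑ i, ∑ j, |M⁻¹ i j|, Finset.sum_nonneg fun i _ => Finset.sum_nonneg fun j _ => abs_nonneg _,
    fun w c hw i => ?_⟩
  have hc : 0 ≤ c := le_trans (norm_nonneg _) (hw 0)
  have hkey : w i = ∑ j, M⁻¹ i j • ∑ l, M j l • w l := by
    have h1 : ∀ j, (∑ l, M j l • w l) = ∑ l, M j l • w l := fun _ => rfl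
    calc w i = ∑ l, ((1 : Matrix (Fin (k+1)) (Fin (k+1)) ℝ) i l) • w l := by
          simp [Matrix.one_apply]
      _ = ∑ l, ((M⁻¹ * M) i l) • w l := by
          rw [Matrix.nonsing_inv_mul M (isUnit_iff_ne_zero.2 hdet)]
      _ = ∑ l, (∑ j, M⁻¹ i j * M j l) • w l := by
          simp [Matrix.mul_apply]
      _ = ∑ l, ∑ j, (M⁻¹ i j * M j l) • w l := by
          refine Finset.sum_congr rfl fun l _ => ?_; rw [Finset.sum_smul]
      _ = ∑ j, ∑ l, (M⁻¹ i j * M j l) • w l := Finset.sum_comm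
      _ = ∑ j, M⁻¹ i j • ∑ l, M j l • w l := by
          refine Finset.sum_congr rfl fun j _ => ?_
          rw [Finset.smul_sum]
          refine Finset.sum_congr rfl fun l _ => ?_
          rw [smul_smul]
  calc ‖w i‖ = ‖∑ j, M⁻¹ i j • ∑ l, M j l • w l‖ := by rw [← hkey]
    _ ≤ ∑ j, ‖M⁻¹ i j • ∑ l, M j l • w l‖ := norm_sum_le _ _
    _ ≤ ∑ j : Fin (k+1), |M⁻¹ i j| * c := by
        refine Finset.sum_le_sum fun j _ => ?_
        rw [norm_smul, Real.norm_eq_abs]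
        refine mul_le_mul_of_nonneg_left ?_ (abs_nonneg _)
        have := hw j
        simpa [hM, Matrix.vandermonde] using this
    _ = (∑ j, |M⁻¹ i j|) * c := by rw [Finset.sum_mul]
    _ ≤ (∑ i', ∑ j, |M⁻¹ i' j|) * c := by
        refine mul_le_mul_of_nonneg_right ?_ hc
        exact Finset.single_le_sum (f := fun i' => ∑ j, |M⁻¹ i' j|)
          (fun i' _ => Finset.sum_nonneg fun j _ => abs_nonneg _) (Finset.mem_univ i)


lemma rigid (k : ℕ) : ∃ Cr : ℝ, 1 ≤ Cr ∧ ∀ (φ : PhiSp k E F) (a : E) (c ρ : ℝ), 0 ≤ c → 0 < ρ →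
    (∀ x, dist x a < ρ → ‖polyEval k φ x‖ ≤ c * dist x a ^ k) →
    ∀ x, ‖polyEval k φ x‖ ≤ Cr * c * dist x a ^ k := by
  obtain ⟨C₀, hC₀, hbound⟩ := coeff_bound (F := F) k
  have hCr0 : (0:ℝ) ≤ (k+1) * C₀ := by positivity
  have hCr1 : (1:ℝ) ≤ (k+1) * C₀ + 1 := by linarith
  refine ⟨(k+1) * C₀ + 1, hCr1, fun φ a c ρ hc hρ H x => ?_⟩
  by_cases hx : dist x a < ρ
  · calc ‖polyEval k φ x‖ ≤ c * dist x a ^ k := H x hx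
      _ ≤ ((k+1) * C₀ + 1) * (c * dist x a ^ k) := by
          exact le_mul_of_one_le_left (by positivity) hCr1
      _ = ((k+1) * C₀ + 1) * c * dist x a ^ k := by ring
  · push_neg at hx
    set s : ℝ := dist x a with hs
    have hs0 : 0 < s := lt_of_lt_of_le hρ hx
    set z : E := (ρ / s) • (x - a) with hz
    have hzn : ‖z‖ = ρ := by
      rw [hz, norm_smul, Real.norm_eq_abs, abs_of_pos (by positivity)]
      rw [hs, dist_eq_norm] at hs0 ⊢
      field_simp
    obtain ⟨w, hw⟩ := exists_coeffs_line k φ a z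
    -- bound on coefficients
    have hnode : ∀ j : Fin (k+1), ‖∑ i : Fin (k+1), (nodes k j) ^ (i:ℕ) • w i‖ ≤ c * ρ ^ k := by
      intro j
      have hdist : dist (a + nodes k j • z) a = nodes k j * ρ := by
        rw [dist_eq_norm, add_sub_cancel_left, norm_smul, Real.norm_eq_abs,
          abs_of_pos (nodes_pos k j), hzn]
      have hlt : dist (a + nodes k j • z) a < ρ := by
        rw [hdist]
        calc nodes k j * ρ < 1 * ρ := by
              exact mul_lt_mul_of_pos_right (nodes_lt_one k j) hρ
          _ = ρ := one_mul ρ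
      have := H _ hlt
      rw [hw (nodes k j)] at this
      refine le_trans this ?_
      rw [hdist, mul_pow]
      refine mul_le_mul_of_nonneg_left ?_ hc
      refine mul_le_of_le_one_left (by positivity) ?_
      exact pow_le_one₀ (le_of_lt (nodes_pos k j)) (le_of_lt (nodes_lt_one k j))
    have hwb : ∀ i, ‖w i‖ ≤ C₀ * (c * ρ ^ k) := hbound w _ hnode
    -- evaluate at s / ρ
    have hxx : x = a + (s / ρ) • z := by
      rw [hz, smul_smul]
      have : s / ρ * (ρ / s) = 1 := by field_simp
      rw [this, one_smul]
      abel
    have hsr : (1:ℝ) ≤ s / ρ := (one_le_div hρ).2 hx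
    calc ‖polyEval k φ x‖ = ‖∑ i : Fin (k+1), (s/ρ) ^ (i:ℕ) • w i‖ := by
          conv_lhs => rw [hxx]
          rw [hw (s/ρ)]
      _ ≤ ∑ i : Fin (k+1), ‖(s/ρ) ^ (i:ℕ) • w i‖ := norm_sum_le _ _
      _ ≤ ∑ _i : Fin (k+1), (s/ρ) ^ k * (C₀ * (c * ρ ^ k)) := by
          refine Finset.sum_le_sum fun i _ => ?_
          rw [norm_smul, Real.norm_eq_abs, abs_of_pos (by positivity)]
          refine mul_le_mul (pow_le_pow_right₀ hsr (Nat.le_of_lt_succ i.is_lt)) (hwb i)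
            (norm_nonneg _) (by positivity)
      _ = (k+1) * ((s/ρ) ^ k * (C₀ * (c * ρ ^ k))) := by
          rw [Finset.sum_const, Finset.card_univ, Fintype.card_fin, nsmul_eq_mul]
          push_cast; ring
      _ = (k+1) * C₀ * c * ((s/ρ) * ρ) ^ k := by rw [mul_pow]; ring
      _ = (k+1) * C₀ * c * s ^ k := by rw [div_mul_cancel₀ _ (ne_of_gt hρ)]
      _ ≤ ((k+1) * C₀ + 1) * c * s ^ k := by
          have : (0:ℝ) ≤ c * s ^ k := by positivity
          nlinarith

lemma polyEval_add_fun (i : ℕ) (φ ψ : PhiSp i E F) :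
    polyEval i (φ + ψ) = polyEval i φ + polyEval i ψ :=
  funext fun x => by rw [polyEval_add]; rfl

lemma polyEval_smul_fun (i : ℕ) (c : ℝ) (φ : PhiSp i E F) :
    polyEval i (c • φ) = c • polyEval i φ :=
  funext fun x => by rw [polyEval_smul]; rfl

/-- `iteratedFDeriv` of a polynomial, as a linear map in the coefficients. -/
def iFDL (i : ℕ) (a : E) : PhiSp i E F →ₗ[ℝ] ContinuousMultilinearMap ℝ (fun _ : Fin i => E) F where
  toFun φ := iteratedFDeriv ℝ i (polyEval i φ) a
  map_add' φ ψ := by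
    show iteratedFDeriv ℝ i (polyEval i (φ + ψ)) a
      = iteratedFDeriv ℝ i (polyEval i φ) a + iteratedFDeriv ℝ i (polyEval i ψ) a
    rw [polyEval_add_fun,
      iteratedFDeriv_add_apply (contDiff_polyEval i φ).contDiffAt (contDiff_polyEval i ψ).contDiffAt]
  map_smul' c φ := by
    show iteratedFDeriv ℝ i (polyEval i (c • φ)) a = c • iteratedFDeriv ℝ i (polyEval i φ) a
    rw [polyEval_smul_fun, iteratedFDeriv_const_smul_apply (contDiff_polyEval i φ).contDiffAt]

lemma continuous_iFD [FiniteDimensional ℝ E] [FiniteDimensional ℝ F] (i : ℕ) :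
    Continuous fun p : E × PhiSp i E F => iteratedFDeriv ℝ i (polyEval i p.2) p.1 := by
  classical
  set b := Module.finBasis ℝ (PhiSp i E F) with hb
  have key : ∀ p : E × PhiSp i E F, iteratedFDeriv ℝ i (polyEval i p.2) p.1
      = ∑ u, b.repr p.2 u • iteratedFDeriv ℝ i (polyEval i (b u)) p.1 := by
    intro p
    calc iteratedFDeriv ℝ i (polyEval i p.2) p.1 = iFDL i p.1 p.2 := rfl
      _ = iFDL i p.1 (∑ u, b.repr p.2 u • b u) := by rw [b.sum_repr]
      _ = ∑ u, b.repr p.2 u • iFDL i p.1 (b u) := by rw [map_sum]; simp only [_root_.map_smul]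
      _ = ∑ u, b.repr p.2 u • iteratedFDeriv ℝ i (polyEval i (b u)) p.1 := rfl
  have : (fun p : E × PhiSp i E F => iteratedFDeriv ℝ i (polyEval i p.2) p.1)
      = fun p => ∑ u, b.repr p.2 u • iteratedFDeriv ℝ i (polyEval i (b u)) p.1 := funext key
  rw [this]
  refine continuous_finset_sum _ fun u _ => Continuous.fun_smul ?_ ?_
  · exact ((b.coord u).continuous_of_finiteDimensional).comp continuous_snd
  · exact (ContDiff.continuous_iteratedFDeriv (le_refl _)
      (contDiff_polyEval i (b u))).comp continuous_fst

/-- projection of a closed set along a compact factor is closed -/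
lemma closed_proj {X Y : Type*} [TopologicalSpace X] [TopologicalSpace Y]
    {S : Set (X × Y)} (hS : IsClosed S) {K : Set Y} (hK : IsCompact K) :
    IsClosed {x : X | ∃ y ∈ K, (x, y) ∈ S} := by
  have : CompactSpace ↥K := isCompact_iff_compactSpace.mp hK
  have hm : Continuous fun q : ↥K × X => ((q.2, (q.1 : Y)) : X × Y) :=
    (continuous_snd.prodMk (continuous_subtype_val.comp continuous_fst))
  have hT : IsClosed ((fun q : ↥K × X => ((q.2, (q.1 : Y)) : X × Y)) ⁻¹' S) :=
    hS.preimage hm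
  have himg : {x : X | ∃ y ∈ K, (x, y) ∈ S}
      = Prod.snd '' ((fun q : ↥K × X => ((q.2, (q.1 : Y)) : X × Y)) ⁻¹' S) := by
    ext x
    constructor
    · rintro ⟨y, hyK, hxy⟩
      exact ⟨(⟨y, hyK⟩, x), hxy, rfl⟩
    · rintro ⟨⟨y, x'⟩, hq, rfl⟩
      exact ⟨y, y.2, hq⟩
  rw [himg]
  exact isClosedMap_snd_of_compactSpace _ hT







lemma zero_pow_nat_le_one (i : ℕ) : (0:ℝ) ^ i ≤ 1 := by
  cases i with
  | zero => simp
  | succ n => simp [zero_pow]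

theorem core [FiniteDimensional ℝ E] [FiniteDimensional ℝ F] [MeasurableSpace E] [BorelSpace E]
    (i : ℕ) {U : Set E} (hU : IsOpen U) (f : E → F)
    (C : Set (ContinuousMultilinearMap ℝ (fun _ : Fin i => E) F)) (hC : IsClosed C) :
    MeasurableSet {a : E | ∃ D ∈ C, IsPtDiffFnDeriv i U f a D} := by
  classical
  obtain ⟨Cr, hCr1, hrig⟩ := rigid (E := E) (F := F) i
  have hCr0 : (0:ℝ) ≤ Cr := le_trans zero_le_one hCr1
  set A : ℕ → ℕ → Set (E × PhiSp i E F) := fun j l =>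
    {p | ∀ x ∈ U, dist x p.1 < 1/(l+1) →
      ‖f x - polyEval i p.2 x‖ ≤ (1/(j+1)) * dist x p.1 ^ i} with hA
  have hAclosed : ∀ j l, IsClosed (A j l) := by
    intro j l
    have heq : A j l = ⋂ x ∈ U, ({p : E × PhiSp i E F | (1:ℝ)/(l+1) ≤ dist x p.1}
        ∪ {p | ‖f x - polyEval i p.2 x‖ ≤ (1/(j+1)) * dist x p.1 ^ i}) := by
      ext p
      simp only [hA, mem_iInter, mem_setOf_eq, mem_union]
      constructor
      · intro h x hx
        by_cases hd : dist x p.1 < 1/(l+1)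
        · exact Or.inr (h x hx hd)
        · exact Or.inl (not_lt.1 hd)
      · intro h x hx hd
        rcases h x hx with h' | h'
        · linarith
        · exact h'
    rw [heq]
    refine isClosed_biInter fun x _ => IsClosed.union ?_ ?_
    · exact isClosed_le continuous_const (Continuous.dist continuous_const continuous_fst)
    · refine isClosed_le ?_ ?_
      · exact (continuous_const.sub ((continuous_polyEvalL i x).comp continuous_snd)).norm
      · exact continuous_const.mul ((Continuous.dist continuous_const continuous_fst).pow i)
  set Sg : Set (E × PhiSp i E F) :=
    (fun p : E × PhiSp i E F => iteratedFDeriv ℝ i (polyEval i p.2) p.1) ⁻¹' C with hSg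
  have hSgclosed : IsClosed Sg := hC.preimage (continuous_iFD i)
  have hYclosed : ∀ (N j l : ℕ), IsClosed {a : E | ∃ φ ∈ closedBall (0 : PhiSp i E F) (N:ℝ),
      (a, φ) ∈ A j l ∩ Sg} :=
    fun N j l => closed_proj ((hAclosed j l).inter hSgclosed) (isCompact_closedBall _ _)
  have hset : {a : E | ∃ D ∈ C, IsPtDiffFnDeriv i U f a D}
      = U ∩ ⋃ N : ℕ, ⋂ j : ℕ, ⋃ l : ℕ, {a : E | ∃ φ ∈ closedBall (0 : PhiSp i E F) (N:ℝ),
          (a, φ) ∈ A j l ∩ Sg} := by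
    ext a
    constructor
    · rintro ⟨D, hDC, haU, P, ⟨φ, hφ⟩, hfa, hocond, hD⟩
      have hPeq : P = polyEval i φ := funext hφ
      refine ⟨haU, ?_⟩
      obtain ⟨N, hN⟩ := exists_nat_ge ‖φ‖
      refine mem_iUnion.2 ⟨N, mem_iInter.2 fun j => ?_⟩
      obtain ⟨δ, hδ, hcond⟩ := hocond (1/(j+1)) (by positivity)
      obtain ⟨l, hl⟩ := exists_nat_one_div_lt hδ
      refine mem_iUnion.2 ⟨l, φ, by simpa [mem_closedBall, dist_zero_right] using hN, ?_, ?_⟩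
      · intro x hx hd
        have := hcond x hx (lt_trans hd hl)
        rw [Real.rpow_natCast, hPeq] at this
        exact this
      · show iteratedFDeriv ℝ i (polyEval i φ) a ∈ C
        rw [← hPeq, ← hD]
        exact hDC
    · rintro ⟨haU, hmem⟩
      rw [mem_iUnion] at hmem
      obtain ⟨N, hN⟩ := hmem
      have hjl : ∀ j : ℕ, ∃ l : ℕ, ∃ φ : PhiSp i E F, ‖φ‖ ≤ (N:ℝ) ∧ (a, φ) ∈ A j l ∧
          iteratedFDeriv ℝ i (polyEval i φ) a ∈ C := by
        intro j
        have := mem_iInter.1 hN j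
        rw [mem_iUnion] at this
        obtain ⟨l, φ, hφK, hAm, hgm⟩ := this
        exact ⟨l, φ, by simpa [mem_closedBall, dist_zero_right] using hφK, hAm, hgm⟩
      choose l φs hφs hAs hgs using hjl
      obtain ⟨r, hr, hrU⟩ := Metric.isOpen_iff.1 hU a haU
      obtain ⟨φL, hφLK, σ, hσmono, hconv⟩ :=
        (isCompact_closedBall (0 : PhiSp i E F) (N:ℝ)).tendsto_subseq
          (x := φs) (fun j => by simpa [mem_closedBall, dist_zero_right] using hφs j)
      -- comparison estimate between the approximating polynomials
      have hcomp : ∀ s t : ℕ, ∀ x : E, ‖polyEval i (φs s - φs t) x‖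
          ≤ Cr * ((1:ℝ)/(s+1) + 1/(t+1)) * dist x a ^ i := by
        intro s t
        set ρ := min r (min (1/((l s : ℝ)+1)) (1/((l t : ℝ)+1))) with hρdef
        have hρ : 0 < ρ := lt_min hr (lt_min (by positivity) (by positivity))
        refine hrig _ a _ ρ (by positivity) hρ (fun x hx => ?_)
        have hxU : x ∈ U := hrU (mem_ball.2 (lt_of_lt_of_le hx (min_le_left _ _)))
        have h1 := hAs s x hxU (lt_of_lt_of_le hx
          (le_trans (min_le_right _ _) (min_le_left _ _)))
        have h2 := hAs t x hxU (lt_of_lt_of_le hx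
          (le_trans (min_le_right _ _) (min_le_right _ _)))
        rw [polyEval_sub]
        have hiden : polyEval i (φs s) x - polyEval i (φs t) x
            = (f x - polyEval i (φs t) x) - (f x - polyEval i (φs s) x) := by abel
        rw [hiden]
        calc ‖(f x - polyEval i (φs t) x) - (f x - polyEval i (φs s) x)‖
            ≤ ‖f x - polyEval i (φs t) x‖ + ‖f x - polyEval i (φs s) x‖ := norm_sub_le _ _
          _ ≤ (1/((t:ℝ)+1)) * dist x a ^ i + (1/((s:ℝ)+1)) * dist x a ^ i := add_le_add h2 h1
          _ = ((1:ℝ)/(s+1) + 1/(t+1)) * dist x a ^ i := by ring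
      -- pass to the limit in t
      have hlim : ∀ s : ℕ, ∀ x : E, ‖polyEval i (φs (σ s)) x - polyEval i φL x‖
          ≤ Cr * ((1:ℝ)/(σ s+1)) * dist x a ^ i := by
        intro s x
        have hev : Tendsto (fun t => polyEval i (φs (σ t)) x) atTop (𝓝 (polyEval i φL x)) :=
          ((continuous_polyEvalL i x).tendsto _).comp hconv
        have h1 : Tendsto (fun t => ‖polyEval i (φs (σ s) - φs (σ t)) x‖) atTop
            (𝓝 ‖polyEval i (φs (σ s)) x - polyEval i φL x‖) := by
          simp only [polyEval_sub]
          exact (tendsto_const_nhds.sub hev).norm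
        have hz : Tendsto (fun t : ℕ => (1:ℝ)/((σ t : ℝ)+1)) atTop (𝓝 0) := by
          have := (tendsto_one_div_add_atTop_nhds_zero_nat (𝕜 := ℝ)).comp hσmono.tendsto_atTop
          exact this
        have h2 : Tendsto (fun t => Cr * ((1:ℝ)/(σ s+1) + 1/((σ t:ℝ)+1)) * dist x a ^ i) atTop
            (𝓝 (Cr * ((1:ℝ)/(σ s+1) + 0) * dist x a ^ i)) :=
          (((tendsto_const_nhds.add hz).const_mul Cr).mul_const _)
        have := le_of_tendsto_of_tendsto' h1 h2 (fun t => hcomp (σ s) (σ t) x)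
        simpa using this
      -- the limit polynomial works
      have hfP : ∀ s : ℕ, ∀ x ∈ U, dist x a < 1/((l (σ s) : ℝ)+1) →
          ‖f x - polyEval i φL x‖ ≤ (1 + Cr) * ((1:ℝ)/(σ s+1)) * dist x a ^ i := by
        intro s x hxU hxd
        have h1 := hAs (σ s) x hxU hxd
        have h2 := hlim s x
        calc ‖f x - polyEval i φL x‖
            ≤ ‖f x - polyEval i (φs (σ s)) x‖
              + ‖polyEval i (φs (σ s)) x - polyEval i φL x‖ := by
                have : f x - polyEval i φL x = (f x - polyEval i (φs (σ s)) x)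
                    + (polyEval i (φs (σ s)) x - polyEval i φL x) := by abel
                rw [this]; exact norm_add_le _ _
          _ ≤ (1/((σ s:ℝ)+1)) * dist x a ^ i + Cr * ((1:ℝ)/(σ s+1)) * dist x a ^ i :=
              add_le_add h1 h2
          _ = (1 + Cr) * ((1:ℝ)/(σ s+1)) * dist x a ^ i := by ring
      have hfa : f a = polyEval i φL a := by
        have hb : ∀ s : ℕ, ‖f a - polyEval i φL a‖ ≤ (1 + Cr) * ((1:ℝ)/(σ s+1)) := by
          intro s
          have := hfP s a haU (by simp; positivity)
          simp only [dist_self] at this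
          refine le_trans this ?_
          have h01 : (0:ℝ) ^ i ≤ 1 := zero_pow_nat_le_one i
          have hpos : (0:ℝ) ≤ (1 + Cr) * ((1:ℝ)/(σ s+1)) := by positivity
          nlinarith
        have ht : Tendsto (fun s : ℕ => (1 + Cr) * ((1:ℝ)/(σ s+1))) atTop (𝓝 0) := by
          have hz : Tendsto (fun t : ℕ => (1:ℝ)/((σ t : ℝ)+1)) atTop (𝓝 0) := by
            have := (tendsto_one_div_add_atTop_nhds_zero_nat (𝕜 := ℝ)).comp hσmono.tendsto_atTop
            exact this
          simpa using hz.const_mul (1 + Cr)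
        have h0 : ‖f a - polyEval i φL a‖ ≤ 0 := ge_of_tendsto' ht hb
        have := norm_le_zero_iff.1 h0
        exact sub_eq_zero.1 this
      have hgC : iteratedFDeriv ℝ i (polyEval i φL) a ∈ C := by
        have hcont : Continuous fun φ : PhiSp i E F =>
            iteratedFDeriv ℝ i (polyEval i φ) a :=
          (continuous_iFD i).comp (Continuous.prodMk continuous_const continuous_id)
        refine hC.mem_of_tendsto ((hcont.tendsto _).comp hconv)
          (Filter.Eventually.of_forall fun t => ?_)
        exact hgs (σ t)
      refine ⟨iteratedFDeriv ℝ i (polyEval i φL) a, hgC, haU, polyEval i φL,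
        ⟨φL, fun x => rfl⟩, hfa, ?_, rfl⟩
      intro ε hε
      obtain ⟨s₀, hs₀⟩ := exists_nat_gt ((1 + Cr)/ε)
      have hcast : ((1:ℝ) + Cr) * ((1:ℝ)/(σ s₀+1)) ≤ ε := by
        have hle : (s₀ : ℝ) ≤ (σ s₀ : ℝ) + 1 := by
          have h0 : s₀ ≤ σ s₀ := hσmono.le_apply
          have : (s₀:ℝ) ≤ (σ s₀ : ℝ) := by exact_mod_cast h0
          linarith
        have h1 : (1 + Cr)/ε < (σ s₀ : ℝ) + 1 := lt_of_lt_of_le hs₀ hle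
        rw [div_lt_iff₀ hε] at h1
        rw [mul_one_div, div_le_iff₀ (by positivity)]
        nlinarith
      refine ⟨1/((l (σ s₀) : ℝ)+1), by positivity, fun x hxU hxd => ?_⟩
      rw [Real.rpow_natCast]
      calc ‖f x - polyEval i φL x‖ ≤ (1 + Cr) * ((1:ℝ)/(σ s₀+1)) * dist x a ^ i :=
            hfP s₀ x hxU hxd
        _ ≤ ε * dist x a ^ i := by
            refine mul_le_mul_of_nonneg_right hcast (by positivity)
  rw [hset]
  exact (hU.measurableSet).inter (MeasurableSet.iUnion fun N => MeasurableSet.iInter fun j =>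
    MeasurableSet.iUnion fun l => (hYclosed N j l).measurableSet)




theorem core_alpha [FiniteDimensional ℝ E] [FiniteDimensional ℝ F]
    [MeasurableSpace E] [BorelSpace E]
    (k : ℕ) {α : ℝ} (hα : 0 < α) {U : Set E} (hU : IsOpen U) (f : E → F) :
    MeasurableSet {a : E | PtDiffFnAt k α U f a} := by
  classical
  have hkα : (0:ℝ) < (k:ℝ) + α := by positivity
  set B : ℕ → ℕ → Set (E × PhiSp k E F) := fun j l =>
    {p | ∀ x ∈ U, dist x p.1 < 1/(l+1) →
      ‖f x - polyEval k p.2 x‖ ≤ (j:ℝ) * dist x p.1 ^ ((k:ℝ)+α)} with hB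
  have hBclosed : ∀ j l, IsClosed (B j l) := by
    intro j l
    have heq : B j l = ⋂ x ∈ U, ({p : E × PhiSp k E F | (1:ℝ)/(l+1) ≤ dist x p.1}
        ∪ {p | ‖f x - polyEval k p.2 x‖ ≤ (j:ℝ) * dist x p.1 ^ ((k:ℝ)+α)}) := by
      ext p
      simp only [hB, mem_iInter, mem_setOf_eq, mem_union]
      constructor
      · intro h x hx
        by_cases hd : dist x p.1 < 1/(l+1)
        · exact Or.inr (h x hx hd)
        · exact Or.inl (not_lt.1 hd)
      · intro h x hx hd
        rcases h x hx with h' | h'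
        · linarith
        · exact h'
    rw [heq]
    refine isClosed_biInter fun x _ => IsClosed.union ?_ ?_
    · exact isClosed_le continuous_const (Continuous.dist continuous_const continuous_fst)
    · refine isClosed_le ?_ ?_
      · exact (continuous_const.sub ((continuous_polyEvalL k x).comp continuous_snd)).norm
      · refine continuous_const.mul ?_
        exact Continuous.rpow_const (Continuous.dist continuous_const continuous_fst)
          (fun p => Or.inr (le_of_lt hkα))
  have hYclosed : ∀ (N j l : ℕ), IsClosed {a : E | ∃ φ ∈ closedBall (0 : PhiSp k E F) (N:ℝ),
      (a, φ) ∈ B j l} := fun N j l => closed_proj (hBclosed j l) (isCompact_closedBall _ _)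
  have hset : {a : E | PtDiffFnAt k α U f a} = U ∩ ⋃ N : ℕ, ⋃ j : ℕ, ⋃ l : ℕ,
      {a : E | ∃ φ ∈ closedBall (0 : PhiSp k E F) (N:ℝ), (a, φ) ∈ B j l} := by
    ext a
    constructor
    · rintro ⟨haU, P, ⟨φ, hφ⟩, hfa, _, hO⟩
      have hPeq : P = polyEval k φ := funext hφ
      obtain ⟨c, δ, hδ, hcond⟩ := hO (ne_of_gt hα)
      obtain ⟨N, hN⟩ := exists_nat_ge ‖φ‖
      obtain ⟨j, hj⟩ := exists_nat_ge c
      obtain ⟨l, hl⟩ := exists_nat_one_div_lt hδ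
      refine ⟨haU, mem_iUnion.2 ⟨N, mem_iUnion.2 ⟨j, mem_iUnion.2 ⟨l, φ,
        by simpa [mem_closedBall, dist_zero_right] using hN, fun x hx hd => ?_⟩⟩⟩⟩
      have := hcond x hx (lt_trans hd hl)
      rw [hPeq] at this
      refine le_trans this ?_
      exact mul_le_mul_of_nonneg_right hj (Real.rpow_nonneg dist_nonneg _)
    · rintro ⟨haU, hmem⟩
      simp only [mem_iUnion] at hmem
      obtain ⟨N, j, l, φ, _, hcond⟩ := hmem
      have hfa : f a = polyEval k φ a := by
        have := hcond a haU (by rw [dist_self]; positivity)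
        rw [dist_self, Real.zero_rpow (ne_of_gt hkα), mul_zero] at this
        exact sub_eq_zero.1 (norm_le_zero_iff.1 this)
      exact ⟨haU, polyEval k φ, ⟨φ, fun x => rfl⟩, hfa,
        fun h => absurd h (ne_of_gt hα), fun _ => ⟨j, 1/((l:ℝ)+1), by positivity, hcond⟩⟩
  rw [hset]
  exact hU.measurableSet.inter (MeasurableSet.iUnion fun N => MeasurableSet.iUnion fun j =>
    MeasurableSet.iUnion fun l => (hYclosed N j l).measurableSet)


end PtAux

/-- the pointwise differentials `pt D^i f` are Borel functions with Borel
domains, and the set of points of pointwise differentiability of order `γ` is Borel. -/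
theorem stmt_8 (k m n : ℕ) (hm : 0 < m) (hn : 0 < n) (hmn : m < n)
    (α : ℝ) (hα0 : 0 ≤ α) (hα1 : α ≤ 1)
    (U : Set (EuclideanSpace ℝ (Fin m))) (hU : IsOpen U)
    (f : EuclideanSpace ℝ (Fin m) → EuclideanSpace ℝ (Fin (n - m))) :
    (∀ i : ℕ, i ≤ k →
      MeasurableSet {a : EuclideanSpace ℝ (Fin m) |
        ∃ D : ContinuousMultilinearMap ℝ
            (fun _ : Fin i => EuclideanSpace ℝ (Fin m)) (EuclideanSpace ℝ (Fin (n - m))),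
          IsPtDiffFnDeriv i U f a D} ∧
      ∀ C : Set (ContinuousMultilinearMap ℝ
          (fun _ : Fin i => EuclideanSpace ℝ (Fin m)) (EuclideanSpace ℝ (Fin (n - m)))),
        IsClosed C →
        MeasurableSet {a : EuclideanSpace ℝ (Fin m) |
          ∃ D ∈ C, IsPtDiffFnDeriv i U f a D}) ∧
    MeasurableSet {a : EuclideanSpace ℝ (Fin m) | PtDiffFnAt k α U f a}  := by
  constructor
  · intro i _
    constructor
    · have h : {a : EuclideanSpace ℝ (Fin m) | ∃ D, IsPtDiffFnDeriv i U f a D}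
          = {a : EuclideanSpace ℝ (Fin m) | ∃ D ∈ (univ : Set (ContinuousMultilinearMap ℝ
              (fun _ : Fin i => EuclideanSpace ℝ (Fin m)) (EuclideanSpace ℝ (Fin (n - m))))),
              IsPtDiffFnDeriv i U f a D} := by
        ext a; simp
      rw [h]
      exact PtAux.core i hU f univ isClosed_univ
    · intro C hC
      exact PtAux.core i hU f C hC
  · by_cases hα : α = 0
    · subst hα
      have h : {a : EuclideanSpace ℝ (Fin m) | PtDiffFnAt k 0 U f a}
          = {a : EuclideanSpace ℝ (Fin m) | ∃ D ∈ (univ : Set (ContinuousMultilinearMap ℝ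
              (fun _ : Fin k => EuclideanSpace ℝ (Fin m)) (EuclideanSpace ℝ (Fin (n - m))))),
              IsPtDiffFnDeriv k U f a D} := by
        ext a
        constructor
        · rintro ⟨haU, P, hpoly, hfa, h0, _⟩
          exact ⟨iteratedFDeriv ℝ k P a, trivial, haU, P, hpoly, hfa, h0 rfl, rfl⟩
        · rintro ⟨D, _, haU, P, hpoly, hfa, hcond, _⟩
          exact ⟨haU, P, hpoly, hfa, fun _ => hcond, fun h => absurd rfl h⟩
      rw [h]
      exact PtAux.core k hU f univ isClosed_univ
    · exact PtAux.core_alpha k (lt_of_le_of_ne hα0 (Ne.symm hα)) hU f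

end
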